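/- Let A be an n×n real matrix all of whose off-diagonal entries are nonpositive. If there exists a diagonal matrix D with strictly positive diagonal entries such that every row sum of the product A·D is strictly positive, then A is invertible and every entry of A⁻¹ is nonnegative. -/

import Mathlib

lemma key_mono (n : ℕ) (B : Matrix (Fin n) (Fin n) ℝ)
    (hz : ∀ i j : Fin n, i ≠ j → B i j ≤ 0)
    (hrow : ∀ i : Fin n, 0 < ∑ j, B i j)
    (x : Fin n → ℝ) (hy : ∀ k, 0 ≤ B.mulVec x k) :
    ∀ k, 0 ≤ x k := by
  by_contra h
  push_neg at h
  obtain ⟨k0, hk0⟩ := h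
  obtain ⟨k, -, hkmin⟩ := Finset.exists_min_image Finset.univ x ⟨k0, Finset.mem_univ k0⟩
  have hxk : x k < 0 := lt_of_le_of_lt (hkmin k0 (Finset.mem_univ k0)) hk0
  have h1 : B.mulVec x k ≤ (∑ j, B k j) * x k := by
    rw [Matrix.mulVec, dotProduct, Finset.sum_mul]
    apply Finset.sum_le_sum
    intro j _
    by_cases hj : j = k
    · subst hj; exact le_rfl
    · exact mul_le_mul_of_nonpos_left (hkmin j (Finset.mem_univ j)) (hz k j (Ne.symm hj))
  have h2 : (∑ j, B k j) * x k < 0 := mul_neg_of_pos_of_neg (hrow k) hxk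
  linarith [hy k]

/-- If all off-diagonal entries of a real `n × n` matrix `A` are nonpositive and
there is a diagonal matrix `D` with strictly positive diagonal entries such that every row sum
of `A * D` is strictly positive, then `A` is invertible and every entry of `A⁻¹` is
nonnegative. -/
theorem m_matrix_inverse_nonneg
    (n : ℕ) (A : Matrix (Fin n) (Fin n) ℝ)
    (hz : ∀ i j : Fin n, i ≠ j → A i j ≤ 0)
    (hD : ∃ d : Fin n → ℝ,
        (∀ i, 0 < d i) ∧ ∀ i : Fin n, 0 < ∑ j, (A * Matrix.diagonal d) i j) :
    IsUnit A.det ∧ ∀ i j : Fin n, 0 ≤ A⁻¹ i j := by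
  obtain ⟨d, hd, hrow⟩ := hD
  set B := A * Matrix.diagonal d with hB
  have hBz : ∀ i j : Fin n, i ≠ j → B i j ≤ 0 := by
    intro i j hij
    rw [hB, Matrix.mul_diagonal]
    exact mul_nonpos_of_nonpos_of_nonneg (hz i j hij) (hd j).le
  -- B is injective on mulVec
  have hinj : ∀ v : Fin n → ℝ, B.mulVec v = 0 → v = 0 := by
    intro v hv
    have h1 : ∀ k, 0 ≤ v k := key_mono n B hBz hrow v (by rw [hv]; intro k; simp)
    have h2 : ∀ k, 0 ≤ -v k := key_mono n B hBz hrow (-v)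
      (by rw [Matrix.mulVec_neg, hv]; intro k; simp)
    funext k
    have := h1 k; have := h2 k
    simp only [Pi.zero_apply]
    linarith
  have hdetB : B.det ≠ 0 := by
    intro h
    obtain ⟨v, hv0, hv⟩ := (Matrix.exists_mulVec_eq_zero_iff).mpr h
    exact hv0 (hinj v hv)
  have hdetA : A.det ≠ 0 := by
    intro h
    apply hdetB
    rw [hB, Matrix.det_mul, h, zero_mul]
  have hunit : IsUnit A.det := isUnit_iff_ne_zero.mpr hdetA
  refine ⟨hunit, ?_⟩
  intro i j
  have hAAinv : A * A⁻¹ = 1 := Matrix.mul_nonsing_inv A hunit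
  set v : Fin n → ℝ := fun k => A⁻¹ k j / d k with hvdef
  have hBv : ∀ k, B.mulVec v k = (1 : Matrix (Fin n) (Fin n) ℝ) k j := by
    intro k
    rw [← hAAinv]
    rw [Matrix.mulVec, dotProduct, Matrix.mul_apply]
    apply Finset.sum_congr rfl
    intro m _
    rw [hB, Matrix.mul_diagonal, hvdef]
    have hdm : d m ≠ 0 := (hd m).ne'
    field_simp
  have hvnn : ∀ k, 0 ≤ v k := by
    apply key_mono n B hBz hrow
    intro k
    rw [hBv k, Matrix.one_apply]
    by_cases h : k = j <;> simp [h]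
  have : A⁻¹ i j = v i * d i := by
    rw [hvdef]
    have hdi : d i ≠ 0 := (hd i).ne'
    field_simp
  rw [this]
  exact mul_nonneg (hvnn i) (hd i).le
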